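/- Let w be the formal power series w = ∑_{n≥1} n^{n−1}·y^n/n! with rational coefficients. Then w satisfies Lambert's functional equation w·exp(−w) = y in the ring of formal power series in y over the rationals (exp(−w) is well defined since w has zero constant term). -/

import Mathlib

/-- Lambert's series `w = ∑_{n ≥ 1} n^(n-1) yⁿ/n!` as a formal power series over `ℚ`. -/
noncomputable def lambertW : PowerSeries ℚ :=
  PowerSeries.mk fun n => if n = 0 then 0 else (n : ℚ) ^ (n - 1) / n.factorial

/-- The formal exponential `exp f = ∑_{k ≥ 0} f^k/k!` of a formal power series `f`
with zero constant term: since `f^k` has order at least `k`, the coefficient of `yⁿ`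
only involves the terms with `k ≤ n`. -/
noncomputable def expOf (f : PowerSeries ℚ) : PowerSeries ℚ :=
  PowerSeries.mk fun n =>
    ∑ k ∈ Finset.range (n + 1), PowerSeries.coeff n (f ^ k) / k.factorial

section AbelIdentity
open Polynomial Finset

noncomputable def abelP (n : ℕ) (y : ℚ) : Polynomial ℚ :=
  ∑ k ∈ Finset.range (n + 1),
    if k = 0 then Polynomial.C ((y + n) ^ n)
    else (n.choose k : ℚ) •
      (Polynomial.X * (Polynomial.X + Polynomial.C (k : ℚ)) ^ (k - 1) *
        Polynomial.C ((y + ((n - k : ℕ) : ℚ)) ^ (n - k)))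

theorem abel_der (n : ℕ) (y : ℚ) :
    Polynomial.derivative (abelP (n + 1) y)
      = ((n : ℚ) + 1) • ((abelP n y).comp (Polynomial.X + 1)) := by
  rw [abelP, abelP, map_sum, Polynomial.sum_comp, Finset.smul_sum, Finset.sum_range_succ']
  simp only [Nat.succ_ne_zero, if_false, reduceIte, map_zero, add_zero, derivative_C]
  refine Finset.sum_congr rfl ?_
  intro i hi
  have hin : i ≤ n := Nat.lt_succ_iff.mp (Finset.mem_range.mp hi)
  rcases Nat.eq_zero_or_pos i with h0 | hpos
  · subst h0
    simp only [reduceIte, Polynomial.smul_comp, Polynomial.C_comp, Nat.succ_sub_succ,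
      Nat.sub_zero, pow_zero, mul_one, Nat.choose_one_right]
    rw [Polynomial.derivative_smul, Polynomial.derivative_mul, Polynomial.derivative_X,
      Polynomial.derivative_C, mul_zero, add_zero, one_mul]
    norm_num
  · have h1 : i - 1 + 1 = i := Nat.succ_pred_eq_of_pos hpos
    have hne : ¬ i = 0 := Nat.pos_iff_ne_zero.mp hpos
    simp only [hne, if_false, Nat.succ_sub_succ, Nat.sub_zero]
    rw [Polynomial.derivative_smul, Polynomial.derivative_mul, Polynomial.derivative_C,
      mul_zero, add_zero, Polynomial.smul_comp, Polynomial.mul_comp, Polynomial.mul_comp,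
      Polynomial.X_comp, Polynomial.pow_comp, Polynomial.add_comp, Polynomial.X_comp,
      Polynomial.C_comp, Polynomial.C_comp]
    -- LHS: choose(n+1,i+1) • (D(X * (X+C(i+1))^i) * C(..))
    -- RHS: (n+1) • (choose(n,i) • ((X+1) * ((X+1)+C i)^(i-1) * C(..)))
    have hD : Polynomial.derivative
        (Polynomial.X * (Polynomial.X + Polynomial.C ((i + 1 : ℕ) : ℚ)) ^ i)
        = ((i : ℚ) + 1) • ((Polynomial.X + 1) *
            (Polynomial.X + Polynomial.C ((i + 1 : ℕ) : ℚ)) ^ (i - 1)) := by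
      rw [Polynomial.derivative_mul, Polynomial.derivative_X,
        Polynomial.derivative_pow,
        show (Polynomial.X + Polynomial.C ((i + 1 : ℕ) : ℚ)) ^ i
            = (Polynomial.X + Polynomial.C ((i + 1 : ℕ) : ℚ)) ^ (i - 1) *
              (Polynomial.X + Polynomial.C ((i + 1 : ℕ) : ℚ)) by rw [← pow_succ, h1]]
      simp only [map_add, Polynomial.derivative_X, Polynomial.derivative_C, add_zero,
        Polynomial.smul_eq_C_mul]
      push_cast
      simp only [map_add, map_one]
      ring
    rw [hD]
    have hch : ((n + 1).choose (i + 1) : ℚ) * ((i : ℚ) + 1) = ((n : ℚ) + 1) * (n.choose i : ℚ) := by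
      have h' : ((n + 1).choose (i + 1) * (i + 1) : ℕ) = (n + 1) * n.choose i :=
        (Nat.add_one_mul_choose_eq n i).symm
      have h2 := congrArg (fun m : ℕ => (m : ℚ)) h'
      push_cast at h2
      exact h2
    have h2 : (Polynomial.X + 1) + Polynomial.C ((i : ℕ) : ℚ)
        = Polynomial.X + Polynomial.C ((i + 1 : ℕ) : ℚ) := by
      push_cast; simp only [map_add, map_one]; ring
    rw [h2, smul_smul, smul_mul_assoc, smul_smul, hch]

theorem abelP_eval_zero (n : ℕ) (y : ℚ) : (abelP n y).eval 0 = (y + n) ^ n := by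
  rw [abelP, Polynomial.eval_finset_sum, Finset.sum_range_succ']
  simp

theorem abel_main (n : ℕ) : ∀ y : ℚ, abelP n y = (Polynomial.X + Polynomial.C (y + n)) ^ n := by
  induction n with
  | zero => intro y; simp [abelP]
  | succ n ih =>
    intro y
    have hcomp : (abelP n y).comp (Polynomial.X + 1)
        = (Polynomial.X + Polynomial.C (y + (n + 1 : ℕ))) ^ n := by
      rw [ih y, Polynomial.pow_comp, Polynomial.add_comp, Polynomial.X_comp, Polynomial.C_comp]
      push_cast
      simp only [map_add, map_one]
      ring_nf
    have hder2 : Polynomial.derivative ((Polynomial.X + Polynomial.C (y + (n + 1 : ℕ))) ^ (n + 1))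
        = ((n : ℚ) + 1) • (Polynomial.X + Polynomial.C (y + (n + 1 : ℕ))) ^ n := by
      rw [Polynomial.derivative_pow]
      simp [Polynomial.smul_eq_C_mul]
    have h0 : Polynomial.derivative
        (abelP (n + 1) y - (Polynomial.X + Polynomial.C (y + (n + 1 : ℕ))) ^ (n + 1)) = 0 := by
      rw [map_sub, abel_der, hcomp, hder2, sub_self]
    have hdeg := Polynomial.natDegree_eq_zero_of_derivative_eq_zero h0
    have hC := Polynomial.eq_C_of_natDegree_le_zero (le_of_eq hdeg)
    have heval : (abelP (n + 1) y - (Polynomial.X + Polynomial.C (y + (n + 1 : ℕ))) ^ (n + 1)).eval 0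
        = 0 := by
      rw [Polynomial.eval_sub, abelP_eval_zero]
      simp
    rw [← Polynomial.coeff_zero_eq_eval_zero] at heval
    rw [heval, map_zero] at hC
    have := sub_eq_zero.mp hC
    push_cast at this ⊢
    exact this

theorem abelSum (N : ℕ) :
    ∑ k ∈ Finset.range (N + 1),
      (if k = 0 then 0 else (N.choose k : ℚ) * (k : ℚ) ^ (k - 1) * ((N - k : ℕ) : ℚ) ^ (N - k))
      = (N : ℚ) * (N : ℚ) ^ (N - 1) := by
  have h := congrArg (fun p => Polynomial.eval 0 (Polynomial.derivative p)) (abel_main N 0)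
  rw [abelP, map_sum, Polynomial.eval_finset_sum] at h
  have hR : Polynomial.eval 0 (Polynomial.derivative ((Polynomial.X + Polynomial.C ((0:ℚ) + N)) ^ N))
      = (N : ℚ) * (N : ℚ) ^ (N - 1) := by
    rw [Polynomial.derivative_pow]
    simp
  rw [hR] at h
  rw [← h]
  refine Finset.sum_congr rfl fun k hk => ?_
  rcases eq_or_ne k 0 with h0 | h0
  · subst h0
    simp only [reduceIte]
    rw [Polynomial.derivative_C, Polynomial.eval_zero]
  · simp only [h0, if_false]
    rw [Polynomial.derivative_smul, Polynomial.derivative_mul, Polynomial.derivative_C,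
      mul_zero, add_zero, Polynomial.derivative_mul, Polynomial.derivative_X, one_mul]
    simp [Polynomial.eval_smul, smul_eq_mul]
    ring

end AbelIdentity

section PowerSeriesPart
open PowerSeries

lemma coeff_lambertW (n : ℕ) :
    PowerSeries.coeff n lambertW = if n = 0 then 0 else (n : ℚ) ^ (n - 1) / n.factorial := by
  rw [lambertW, coeff_mk]


lemma coeff_pow_zero_of_lt {f : PowerSeries ℚ} (hf : constantCoeff f = 0)
    {k n : ℕ} (h : n < k) : coeff n (f ^ k) = 0 := by
  have h1 : (X : PowerSeries ℚ) ∣ f := X_dvd_iff.mpr hf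
  have h2 : (X : PowerSeries ℚ) ^ k ∣ f ^ k := pow_dvd_pow_of_dvd h1 k
  exact (X_pow_dvd_iff.mp h2) n h

/-- partial sums of the exponential -/
noncomputable def expS (f : PowerSeries ℚ) (N : ℕ) : PowerSeries ℚ :=
  ∑ k ∈ Finset.range (N + 1), (k.factorial : ℚ)⁻¹ • f ^ k

lemma coeff_expOf_eq {f : PowerSeries ℚ} (hf : constantCoeff f = 0) {n N : ℕ} (h : n ≤ N) :
    coeff n (expOf f) = coeff n (expS f N) := by
  rw [expOf, coeff_mk, expS, map_sum]
  rw [Finset.sum_subset (Finset.range_subset_range.mpr (by omega) :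
    Finset.range (n+1) ⊆ Finset.range (N+1)) ?_]
  · refine Finset.sum_congr rfl fun k _ => ?_
    rw [coeff_smul, smul_eq_mul, div_eq_inv_mul]
  · intro k _ hk
    have hnk : n < k := by
      by_contra hc
      exact hk (Finset.mem_range.mpr (by omega))
    rw [coeff_pow_zero_of_lt hf hnk, zero_div]

lemma coeff_mul_congr {g h h' : PowerSeries ℚ} {n : ℕ}
    (H : ∀ m ≤ n, coeff m h = coeff m h') :
    coeff n (g * h) = coeff n (g * h') := by
  rw [coeff_mul, coeff_mul]
  refine Finset.sum_congr rfl fun p hp => ?_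
  have : p.1 + p.2 = n := Finset.HasAntidiagonal.mem_antidiagonal.mp hp
  rw [H p.2 (by omega)]

lemma derivative_expS (f : PowerSeries ℚ) (N : ℕ) :
    d⁄dX ℚ (expS f (N + 1)) = d⁄dX ℚ f * expS f N := by
  rw [expS, map_sum, Finset.sum_range_succ', expS, Finset.mul_sum]
  have h0 : d⁄dX ℚ ((Nat.factorial 0 : ℚ)⁻¹ • f ^ 0) = 0 := by
    simp
  rw [h0, add_zero]
  refine Finset.sum_congr rfl fun j _ => ?_
  rw [Derivation.map_smul, Derivation.leibniz_pow, Nat.succ_sub_one,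
    ← Nat.cast_smul_eq_nsmul ℚ, smul_smul, smul_eq_mul, mul_smul_comm, mul_comm ((d⁄dX ℚ) f)]
  congr 1
  rw [Nat.factorial_succ]
  push_cast
  have h1 : (j.factorial : ℚ) ≠ 0 := Nat.cast_ne_zero.mpr j.factorial_ne_zero
  field_simp

lemma derivative_expOf {f : PowerSeries ℚ} (hf : constantCoeff f = 0) :
    d⁄dX ℚ (expOf f) = d⁄dX ℚ f * expOf f := by
  ext n
  rw [PowerSeries.coeff_derivative, coeff_expOf_eq hf (le_refl (n+1)),
    ← PowerSeries.coeff_derivative, derivative_expS]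
  exact coeff_mul_congr fun m hm => (coeff_expOf_eq hf hm).symm

lemma constantCoeff_expOf (f : PowerSeries ℚ) : constantCoeff (expOf f) = 1 := by
  have : constantCoeff (expOf f) = coeff 0 (expOf f) := by
    rw [PowerSeries.coeff_zero_eq_constantCoeff]
  rw [this, expOf, coeff_mk]
  simp

lemma constantCoeff_lambertW : constantCoeff lambertW = 0 := by
  have : constantCoeff lambertW = coeff 0 lambertW := by
    rw [PowerSeries.coeff_zero_eq_constantCoeff]
  rw [this, lambertW, coeff_mk]
  simp

theorem lambert_ode :
    X * ((1 - lambertW) * d⁄dX ℚ lambertW) = lambertW := by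
  ext n
  cases n with
  | zero =>
    simp [PowerSeries.coeff_zero_eq_constantCoeff, map_mul, coeff_lambertW]
  | succ n =>
    rw [PowerSeries.coeff_succ_X_mul, sub_mul, one_mul, map_sub, PowerSeries.coeff_derivative,
      PowerSeries.coeff_mul, Finset.Nat.sum_antidiagonal_eq_sum_range_succ_mk]
    have hfac : ∀ m : ℕ, ((m.factorial : ℚ)) ≠ 0 := fun m => Nat.cast_ne_zero.mpr m.factorial_ne_zero
    have hsum : ∑ i ∈ Finset.range (n + 1),
        coeff i lambertW * coeff (n - i) (d⁄dX ℚ lambertW)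
        = (((n+1).factorial : ℚ))⁻¹ *
          ∑ k ∈ Finset.range (n + 1),
            (if k = 0 then 0 else ((n+1).choose k : ℚ) * (k : ℚ) ^ (k - 1) * (((n+1) - k : ℕ) : ℚ) ^ ((n+1) - k)) := by
      rw [Finset.mul_sum]
      refine Finset.sum_congr rfl fun i hi => ?_
      have hin : i ≤ n := Nat.lt_succ_iff.mp (Finset.mem_range.mp hi)
      rcases eq_or_ne i 0 with h0 | h0
      · subst h0; simp [coeff_lambertW]
      · simp only [h0, if_false]
        rw [PowerSeries.coeff_derivative, coeff_lambertW, coeff_lambertW,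
          if_neg h0, if_neg (Nat.succ_ne_zero (n - i))]
        have hm : (n + 1) - i = (n - i) + 1 := by omega
        rw [hm]
        have hch : (((n+1).choose i : ℕ) : ℚ) * (i.factorial : ℚ) * (((n - i) + 1).factorial : ℚ)
            = ((n+1).factorial : ℚ) := by
          have := Nat.choose_mul_factorial_mul_factorial (le_of_lt (Nat.lt_succ_of_le hin) : i ≤ n + 1)
          rw [hm] at this
          exact_mod_cast this
        have hpow : ((n - i + 1 : ℕ) : ℚ) ^ (n - i + 1 - 1) * (((n - i : ℕ) : ℚ) + 1)
            = ((n - i + 1 : ℕ) : ℚ) ^ (n - i + 1) := by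
          rw [Nat.add_sub_cancel]
          push_cast
          ring
        rw [Nat.add_sub_cancel]
        field_simp
        rw [← hch]
        push_cast
        ring
    have habel := abelSum (n+1)
    rw [Finset.sum_range_succ] at habel
    simp only [Nat.succ_ne_zero, if_false, Nat.choose_self, Nat.cast_one, one_mul,
      Nat.sub_self, pow_zero, mul_one, Nat.add_sub_cancel] at habel
    have habel' : ∑ k ∈ Finset.range (n + 1),
        (if k = 0 then 0 else ((n+1).choose k : ℚ) * (k : ℚ) ^ (k - 1) * (((n+1) - k : ℕ) : ℚ) ^ ((n+1) - k))
        = ((n+1 : ℕ) : ℚ) * ((n+1 : ℕ) : ℚ) ^ n - ((n+1 : ℕ) : ℚ) ^ n := by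
      rw [← habel]; ring
    rw [hsum, habel']
    rw [coeff_lambertW, if_neg (Nat.succ_ne_zero n), Nat.add_sub_cancel]
    have h1 : ((n+1).factorial : ℚ) ≠ 0 := hfac _
    field_simp
    push_cast
    ring

/-- Lambert'"'"'s functional equation: `w exp(-w) = y`. -/
theorem lambertW_functional_equation :
    lambertW * expOf (-lambertW) = PowerSeries.X := by
  have hw0 : constantCoeff lambertW = 0 := constantCoeff_lambertW
  have hE : d⁄dX ℚ (expOf (-lambertW)) = -(d⁄dX ℚ lambertW) * expOf (-lambertW) := by
    rw [derivative_expOf (by rw [map_neg, hw0, neg_zero]), map_neg]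
  have key : X * d⁄dX ℚ (lambertW * expOf (-lambertW)) = lambertW * expOf (-lambertW) := by
    have hl : d⁄dX ℚ (lambertW * expOf (-lambertW))
        = lambertW • (d⁄dX ℚ (expOf (-lambertW))) + (expOf (-lambertW)) • d⁄dX ℚ lambertW :=
      Derivation.leibniz _ _ _
    rw [hl, hE, smul_eq_mul, smul_eq_mul]
    calc X * (lambertW * (-(d⁄dX ℚ lambertW) * expOf (-lambertW))
            + expOf (-lambertW) * d⁄dX ℚ lambertW)
        = (X * ((1 - lambertW) * d⁄dX ℚ lambertW)) * expOf (-lambertW) := by ring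
      _ = lambertW * expOf (-lambertW) := by rw [lambert_ode]
  ext n
  cases n with
  | zero =>
    simp only [PowerSeries.coeff_zero_eq_constantCoeff, map_mul, hw0, zero_mul, constantCoeff_X]
  | succ n =>
    have hn := congrArg (coeff (n + 1)) key
    rw [PowerSeries.coeff_succ_X_mul, PowerSeries.coeff_derivative] at hn
    rcases eq_or_ne n 0 with h0 | h0
    · subst h0
      rw [PowerSeries.coeff_mul, Finset.Nat.sum_antidiagonal_eq_sum_range_succ_mk,
        Finset.sum_range_succ, Finset.sum_range_succ, Finset.sum_range_zero, zero_add]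
      rw [coeff_lambertW, coeff_lambertW]
      simp only [if_pos rfl, zero_mul, zero_add, Nat.sub_zero]
      simp only [if_true, if_neg (one_ne_zero), zero_mul, zero_add,
        PowerSeries.coeff_zero_eq_constantCoeff, constantCoeff_expOf]
      rw [PowerSeries.coeff_one_X]
      norm_num
      exact constantCoeff_expOf _
    · have hc : coeff (n + 1) (lambertW * expOf (-lambertW)) * ((n : ℚ) + 1)
          = coeff (n + 1) (lambertW * expOf (-lambertW)) := by exact_mod_cast hn
      have : coeff (n + 1) (lambertW * expOf (-lambertW)) * (n : ℚ) = 0 := by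
        linarith [hc]
      have hz : coeff (n + 1) (lambertW * expOf (-lambertW)) = 0 := by
        rcases mul_eq_zero.mp this with h | h
        · exact h
        · exact absurd h (Nat.cast_ne_zero.mpr h0)
      rw [hz, PowerSeries.coeff_X, if_neg (by omega)]

end PowerSeriesPart
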